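/- Let q > 2 and K ∈ L^∞(ℝᴺ) with K(x) → K_∞ as |x| → ∞. If (u_n) is bounded in L^q(ℝᴺ), (y_n) ⊂ ℝᴺ with |y_n| → ∞, and w ∈ L^q(ℝᴺ), then ∫_{ℝᴺ} (K(x) − K_∞) |u_n(x)|^{q−2} u_n(x) w(x − y_n) dx → 0 as n → ∞. -/

import Mathlib

open MeasureTheory Filter Real
open scoped Topology ENNReal

private lemma key_aux {N : ℕ} {q : ℝ} (hq : 2 < q)
    (K : EuclideanSpace ℝ (Fin N) → ℝ)
    (Kinf MK : ℝ) (hKb : ∀ x : EuclideanSpace ℝ (Fin N), |K x| ≤ MK)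
    (f : EuclideanSpace ℝ (Fin N) → ℝ)
    (hf : MeasureTheory.MemLp f (ENNReal.ofReal q) MeasureTheory.volume)
    (w : EuclideanSpace ℝ (Fin N) → ℝ)
    (hw : MeasureTheory.MemLp w (ENNReal.ofReal q) MeasureTheory.volume)
    (z : EuclideanSpace ℝ (Fin N)) (δ : ℝ) (hδ : 0 ≤ δ)
    (hKδ : ∀ x : EuclideanSpace ℝ (Fin N), ‖z‖ / 2 ≤ ‖x‖ → |K x - Kinf| ≤ δ) :
    ‖∫ x : EuclideanSpace ℝ (Fin N), (K x - Kinf) * |f x| ^ (q - 2) * f x * w (x - z)‖ ≤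
      δ * ((∫ x, |f x| ^ q) ^ ((q - 1) / q) * (∫ x, |w x| ^ q) ^ (1 / q)) +
      (MK + |Kinf|) * ((∫ x, |f x| ^ q) ^ ((q - 1) / q) *
        (∫ x', Set.indicator {x : EuclideanSpace ℝ (Fin N) | ‖z‖ / 2 ≤ ‖x‖}
          (fun x => |w x| ^ q) x') ^ (1 / q)) := by
  have hq0 : (0:ℝ) < q := by linarith
  have hq1 : (1:ℝ) < q := by linarith
  have hq1' : (0:ℝ) < q - 1 := by linarith
  have hqne : ENNReal.ofReal q ≠ 0 := by
    simp [ENNReal.ofReal_eq_zero, not_le, hq0]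
  have hqnt : ENNReal.ofReal q ≠ ∞ := ENNReal.ofReal_ne_top
  set p : ℝ := q / (q - 1) with hp_def
  have hpq : p.HolderConjugate q :=
    ((Real.holderConjugate_iff_eq_conjExponent hq1).mpr rfl).symm
  have h1p : 1 / p = (q - 1) / q := one_div_div q (q - 1)
  set CK : ℝ := MK + |Kinf| with hCK_def
  have hCK0 : 0 ≤ CK := add_nonneg ((abs_nonneg (K 0)).trans (hKb 0)) (abs_nonneg Kinf)
  have hKtot : ∀ x, |K x - Kinf| ≤ CK := fun x => by
    have h := norm_sub_le (K x) Kinf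
    simp only [Real.norm_eq_abs] at h
    exact h.trans (add_le_add_left (hKb x) _)
  set r : ℝ := ‖z‖ / 2 with hr_def
  set B : Set (EuclideanSpace ℝ (Fin N)) := Metric.ball 0 r with hB_def
  set a : EuclideanSpace ℝ (Fin N) → ℝ := fun x => |f x| ^ (q - 1) with ha_def
  set b : EuclideanSpace ℝ (Fin N) → ℝ := fun x => |w (x - z)| with hb_def
  set c : EuclideanSpace ℝ (Fin N) → ℝ := fun x => B.indicator b x with hc_def
  have ha0 : ∀ x, 0 ≤ a x := fun x => Real.rpow_nonneg (abs_nonneg _) _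
  have hb0 : ∀ x, 0 ≤ b x := fun x => abs_nonneg _
  have hc0 : ∀ x, 0 ≤ c x := fun x => Set.indicator_nonneg (fun x _ => abs_nonneg _) x
  -- Memℒp facts
  have hv_mem : MemLp (fun x : EuclideanSpace ℝ (Fin N) => w (x - z))
      (ENNReal.ofReal q) volume :=
    hw.comp_measurePreserving (measurePreserving_sub_right volume z)
  have ha_mem : MemLp a (ENNReal.ofReal p) volume := by
    have h := hf.norm_rpow_div (ENNReal.ofReal (q - 1))
    rw [← ENNReal.ofReal_div_of_pos hq1'] at h
    simpa [ha_def, Real.norm_eq_abs, ENNReal.toReal_ofReal hq1'.le, hp_def] using h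
  have hb_mem : MemLp b (ENNReal.ofReal q) volume := by
    simpa [hb_def, Real.norm_eq_abs] using hv_mem.norm
  have hc_mem : MemLp c (ENNReal.ofReal q) volume := by
    have := hb_mem.indicator (μ := volume) (s := B) measurableSet_ball
    simpa [hc_def] using this
  -- integrability of products via Hölder (Memℒp.smul)
  have Hone : (1:ℝ≥0∞) / 1 = 1 / ENNReal.ofReal p + 1 / ENNReal.ofReal q := by
    have h : (ENNReal.ofReal p)⁻¹ + (ENNReal.ofReal q)⁻¹ = 1 := by
      rw [← ENNReal.ofReal_inv_of_pos hpq.pos, ← ENNReal.ofReal_inv_of_pos hq0,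
        ← ENNReal.ofReal_add (by positivity) (by positivity), hpq.inv_add_inv_eq_one,
        ENNReal.ofReal_one]
    simp [one_div, h]
  have hab_int : Integrable (fun x => a x * b x) volume := by
    have h2 := memLp_one_iff_integrable.mp (hb_mem.smul ha_mem (hpqr := ⟨by simpa [one_div] using Hone.symm⟩))
    exact h2
  have hac_int : Integrable (fun x => a x * c x) volume := by
    have h2 := memLp_one_iff_integrable.mp (hc_mem.smul ha_mem (hpqr := ⟨by simpa [one_div] using Hone.symm⟩))
    exact h2
  -- Hölder inequalities
  have H1 := integral_mul_le_Lp_mul_Lq_of_nonneg (μ := volume) hpq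
    (Filter.Eventually.of_forall ha0) (Filter.Eventually.of_forall hb0) ha_mem hb_mem
  have H2 := integral_mul_le_Lp_mul_Lq_of_nonneg (μ := volume) hpq
    (Filter.Eventually.of_forall ha0) (Filter.Eventually.of_forall hc0) ha_mem hc_mem
  -- identification of the integrals
  have hEa : (∫ x, a x ^ p) = ∫ x, |f x| ^ q := by
    refine integral_congr_ae (Filter.Eventually.of_forall fun x => ?_)
    simp only [ha_def]
    rw [← Real.rpow_mul (abs_nonneg _)]
    congr 1
    rw [hp_def]
    field_simp
  have hEb : (∫ x, b x ^ q) = ∫ x, |w x| ^ q := by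
    have := integral_sub_right_eq_self
      (μ := (volume : Measure (EuclideanSpace ℝ (Fin N))))
      (fun t : EuclideanSpace ℝ (Fin N) => |w t| ^ q) z
    simpa [hb_def] using this
  rw [hEa, hEb, h1p] at H1
  rw [hEa, h1p] at H2
  -- the indicator integral bound
  have hwq_int : Integrable (fun t : EuclideanSpace ℝ (Fin N) => |w t| ^ q) volume := by
    simpa [Real.norm_eq_abs, ENNReal.toReal_ofReal hq0.le]
      using hw.integrable_norm_rpow hqne hqnt
  have hSmeas : MeasurableSet {x : EuclideanSpace ℝ (Fin N) | r ≤ ‖x‖} :=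
    (isClosed_le continuous_const continuous_norm).measurableSet
  have hEc : (∫ x, c x ^ q) ≤
      ∫ x', Set.indicator {x : EuclideanSpace ℝ (Fin N) | r ≤ ‖x‖}
        (fun x => |w x| ^ q) x' := by
    have hcq : ∀ x, c x ^ q =
        Set.indicator ((fun t : EuclideanSpace ℝ (Fin N) => t + z) ⁻¹' B)
          (fun t => |w t| ^ q) (x - z) := by
      intro x
      by_cases hx : x ∈ B
      · have hx' : (x - z) ∈ (fun t : EuclideanSpace ℝ (Fin N) => t + z) ⁻¹' B := by
          simp only [Set.mem_preimage, sub_add_cancel]; exact hx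
        simp only [hc_def, Set.indicator_of_mem hx, Set.indicator_of_mem hx', hb_def,
          Real.rpow_natCast]
      · have hx' : (x - z) ∉ (fun t : EuclideanSpace ℝ (Fin N) => t + z) ⁻¹' B := by
          simp only [Set.mem_preimage, sub_add_cancel]; exact hx
        simp only [hc_def, Set.indicator_of_notMem hx, Set.indicator_of_notMem hx']
        exact Real.zero_rpow hq0.ne'
    have e1 : (∫ x, c x ^ q) =
        ∫ t, Set.indicator ((fun t : EuclideanSpace ℝ (Fin N) => t + z) ⁻¹' B)
          (fun t => |w t| ^ q) t := by
      rw [integral_congr_ae (Filter.Eventually.of_forall hcq)]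
      exact integral_sub_right_eq_self
        (μ := (volume : Measure (EuclideanSpace ℝ (Fin N)))) _ z
    rw [e1]
    refine integral_mono_of_nonneg
      (Filter.Eventually.of_forall fun t =>
        Set.indicator_nonneg (fun t _ => Real.rpow_nonneg (abs_nonneg _) _) t)
      (hwq_int.indicator hSmeas)
      (Filter.Eventually.of_forall fun t => ?_)
    by_cases ht : t ∈ (fun t : EuclideanSpace ℝ (Fin N) => t + z) ⁻¹' B
    · have htB : ‖t + z‖ < r := by
        have h := ht
        simp only [Set.mem_preimage, hB_def, Metric.mem_ball, dist_zero_right] at h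
        exact h
      have htS : t ∈ {x : EuclideanSpace ℝ (Fin N) | r ≤ ‖x‖} := by
        have h3 : ‖z‖ - ‖t + z‖ ≤ ‖t‖ := by
          have := norm_sub_norm_le z (t + z)
          have h4 : z - (t + z) = -t := by abel
          rwa [h4, norm_neg] at this
        have : r ≤ ‖t‖ := by
          rw [hr_def] at htB ⊢
          linarith
        exact this
      rw [Set.indicator_of_mem ht, Set.indicator_of_mem htS]
    · rw [Set.indicator_of_notMem ht]
      exact Set.indicator_nonneg (fun t _ => Real.rpow_nonneg (abs_nonneg _) _) t
  -- pointwise bound on the integrand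
  have hnorm : ∀ x, ‖(K x - Kinf) * |f x| ^ (q - 2) * f x * w (x - z)‖ =
      |K x - Kinf| * a x * b x := by
    intro x
    rw [Real.norm_eq_abs, abs_mul, abs_mul, abs_mul,
      abs_of_nonneg (Real.rpow_nonneg (abs_nonneg (f x)) (q - 2))]
    have hpow : |f x| ^ (q - 2) * |f x| = |f x| ^ (q - 1) := by
      nth_rewrite 2 [← Real.rpow_one |f x|]
      rw [← Real.rpow_add' (abs_nonneg _) (by linarith : (0:ℝ) < q - 2 + 1).ne']
      congr 1
      ring
    simp only [ha_def, hb_def]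
    rw [mul_assoc (|K x - Kinf|), hpow]
  have hptwise : ∀ x, ‖(K x - Kinf) * |f x| ^ (q - 2) * f x * w (x - z)‖ ≤
      δ * (a x * b x) + CK * (a x * c x) := by
    intro x
    rw [hnorm x]
    by_cases hx : x ∈ B
    · have hcx : c x = b x := by simp only [hc_def]; rw [Set.indicator_of_mem hx]
      have habx : 0 ≤ a x * b x := mul_nonneg (ha0 x) (hb0 x)
      calc |K x - Kinf| * a x * b x = |K x - Kinf| * (a x * b x) := by ring
        _ ≤ CK * (a x * b x) := mul_le_mul_of_nonneg_right (hKtot x) habx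
        _ = CK * (a x * c x) := by rw [hcx]
        _ ≤ δ * (a x * b x) + CK * (a x * c x) :=
            le_add_of_nonneg_left (mul_nonneg hδ habx)
    · have hxr : ‖z‖ / 2 ≤ ‖x‖ := by
        have : ¬ ‖x‖ < r := by
          have h := hx
          simp only [hB_def, Metric.mem_ball, dist_zero_right] at h
          exact h
        rw [hr_def] at this
        linarith [not_lt.mp this]
      have habx : 0 ≤ a x * b x := mul_nonneg (ha0 x) (hb0 x)
      calc |K x - Kinf| * a x * b x = |K x - Kinf| * (a x * b x) := by ring
        _ ≤ δ * (a x * b x) := mul_le_mul_of_nonneg_right (hKδ x hxr) habx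
        _ ≤ δ * (a x * b x) + CK * (a x * c x) :=
            le_add_of_nonneg_right (mul_nonneg hCK0 (mul_nonneg (ha0 x) (hc0 x)))
  -- assemble
  have hbound_int : Integrable (fun x => δ * (a x * b x) + CK * (a x * c x)) volume :=
    (hab_int.const_mul δ).add (hac_int.const_mul CK)
  have hA0 : (0:ℝ) ≤ (∫ x, |f x| ^ q) ^ ((q - 1) / q) :=
    Real.rpow_nonneg (integral_nonneg fun x => Real.rpow_nonneg (abs_nonneg _) _) _
  have hcq0 : (0:ℝ) ≤ ∫ x, c x ^ q :=
    integral_nonneg fun x => Real.rpow_nonneg (hc0 x) _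
  calc ‖∫ x : EuclideanSpace ℝ (Fin N), (K x - Kinf) * |f x| ^ (q - 2) * f x * w (x - z)‖
      ≤ ∫ x, ‖(K x - Kinf) * |f x| ^ (q - 2) * f x * w (x - z)‖ :=
        norm_integral_le_integral_norm _
    _ ≤ ∫ x, (δ * (a x * b x) + CK * (a x * c x)) :=
        integral_mono_of_nonneg
          (Filter.Eventually.of_forall fun x => norm_nonneg _)
          hbound_int (Filter.Eventually.of_forall hptwise)
    _ = δ * (∫ x, a x * b x) + CK * (∫ x, a x * c x) := by
        rw [integral_add (hab_int.const_mul δ) (hac_int.const_mul CK),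
          integral_const_mul, integral_const_mul]
    _ ≤ δ * ((∫ x, |f x| ^ q) ^ ((q - 1) / q) * (∫ x, |w x| ^ q) ^ (1 / q)) +
        CK * ((∫ x, |f x| ^ q) ^ ((q - 1) / q) *
          (∫ x', Set.indicator {x : EuclideanSpace ℝ (Fin N) | r ≤ ‖x‖}
            (fun x => |w x| ^ q) x') ^ (1 / q)) := by
        refine add_le_add (mul_le_mul_of_nonneg_left H1 hδ)
          (mul_le_mul_of_nonneg_left (H2.trans ?_) hCK0)
        exact mul_le_mul_of_nonneg_left
          (Real.rpow_le_rpow hcq0 hEc (by positivity)) hA0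

theorem stmt_16 (N : ℕ) (hN : 1 ≤ N) (q : ℝ) (hq : 2 < q)
    (K : EuclideanSpace ℝ (Fin N) → ℝ) (hKm : Measurable K)
    (MK : ℝ) (hKb : ∀ x, |K x| ≤ MK)
    (Kinf : ℝ) (hKlim : Tendsto K (Filter.cocompact (EuclideanSpace ℝ (Fin N))) (𝓝 Kinf))
    (u : ℕ → EuclideanSpace ℝ (Fin N) → ℝ)
    (hu : ∀ n, MeasureTheory.MemLp (u n) (ENNReal.ofReal q) MeasureTheory.volume)
    (M : ℝ) (hub : ∀ n,
      MeasureTheory.eLpNorm (u n) (ENNReal.ofReal q) MeasureTheory.volume ≤ ENNReal.ofReal M)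
    (y : ℕ → EuclideanSpace ℝ (Fin N)) (hy : Tendsto (fun n => ‖y n‖) atTop atTop)
    (w : EuclideanSpace ℝ (Fin N) → ℝ)
    (hw : MeasureTheory.MemLp w (ENNReal.ofReal q) MeasureTheory.volume) :
    Tendsto (fun n => ∫ x : EuclideanSpace ℝ (Fin N),
      (K x - Kinf) * |u n x| ^ (q - 2) * u n x * w (x - y n)) atTop (𝓝 0) := by
  have hq0 : (0:ℝ) < q := by linarith
  have hq1 : (1:ℝ) < q := by linarith
  have hq1' : (0:ℝ) < q - 1 := by linarith
  have hqne : ENNReal.ofReal q ≠ 0 := by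
    simp [ENNReal.ofReal_eq_zero, not_le, hq0]
  have hqnt : ENNReal.ofReal q ≠ ∞ := ENNReal.ofReal_ne_top
  set M' : ℝ := max M 0 with hM'_def
  have hM'0 : 0 ≤ M' := le_max_right _ _
  have hub' : ∀ n, eLpNorm (u n) (ENNReal.ofReal q) volume ≤ ENNReal.ofReal M' :=
    fun n => (hub n).trans (ENNReal.ofReal_le_ofReal (le_max_left _ _))
  -- bound on ∫ |u n|^q
  have hIu_le : ∀ n, (∫ x, |u n x| ^ q) ≤ M' ^ q := by
    intro n
    have h1 := (hu n).eLpNorm_eq_integral_rpow_norm hqne hqnt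
    rw [ENNReal.toReal_ofReal hq0.le] at h1
    simp only [Real.norm_eq_abs] at h1
    have h2 : ((∫ x, |u n x| ^ q) ^ q⁻¹ : ℝ) ≤ M' := by
      have h := hub' n
      rw [h1] at h
      exact (ENNReal.ofReal_le_ofReal_iff hM'0).mp h
    have h3 : (0:ℝ) ≤ ∫ x, |u n x| ^ q :=
      integral_nonneg fun x => Real.rpow_nonneg (abs_nonneg _) _
    calc (∫ x, |u n x| ^ q) = ((∫ x, |u n x| ^ q) ^ q⁻¹) ^ q := by
          rw [← Real.rpow_mul h3, inv_mul_cancel₀ hq0.ne', Real.rpow_one]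
      _ ≤ M' ^ q := Real.rpow_le_rpow (Real.rpow_nonneg h3 _) h2 hq0.le
  have hwq_int : Integrable (fun t : EuclideanSpace ℝ (Fin N) => |w t| ^ q) volume := by
    simpa [Real.norm_eq_abs, ENNReal.toReal_ofReal hq0.le]
      using hw.integrable_norm_rpow hqne hqnt
  have hIw0 : (0:ℝ) ≤ ∫ t, |w t| ^ q :=
    integral_nonneg fun t => Real.rpow_nonneg (abs_nonneg _) _
  have hCK0 : 0 ≤ MK + |Kinf| :=
    add_nonneg ((abs_nonneg (K 0)).trans (hKb 0)) (abs_nonneg Kinf)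
  -- the tail integral of |w|^q tends to zero along the translations
  have hr_tendsto : Tendsto (fun n => ‖y n‖ / 2) atTop atTop :=
    hy.atTop_div_const two_pos
  have hW_tendsto : Tendsto (fun n => ∫ x', Set.indicator
      {x : EuclideanSpace ℝ (Fin N) | ‖y n‖ / 2 ≤ ‖x‖} (fun x => |w x| ^ q) x')
      atTop (𝓝 0) := by
    have h := tendsto_integral_filter_of_dominated_convergence
      (μ := (volume : Measure (EuclideanSpace ℝ (Fin N)))) (l := (atTop : Filter ℕ))
      (F := fun n x' => Set.indicator
        {x : EuclideanSpace ℝ (Fin N) | ‖y n‖ / 2 ≤ ‖x‖} (fun x => |w x| ^ q) x')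
      (f := fun _ => (0:ℝ)) (fun t => |w t| ^ q)
      (Filter.Eventually.of_forall fun n =>
        hwq_int.aestronglyMeasurable.indicator
          ((isClosed_le continuous_const continuous_norm).measurableSet))
      (Filter.Eventually.of_forall fun n => Filter.Eventually.of_forall fun t => by
        rw [Real.norm_eq_abs,
          abs_of_nonneg (Set.indicator_nonneg
            (fun t _ => Real.rpow_nonneg (abs_nonneg _) _) t)]
        exact Set.indicator_le_self' (fun t _ => Real.rpow_nonneg (abs_nonneg _) _) t)
      hwq_int
      (Filter.Eventually.of_forall fun t => by
        apply tendsto_const_nhds.congr'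
        filter_upwards [hr_tendsto.eventually_gt_atTop ‖t‖] with n hn
        exact (Set.indicator_of_notMem (by simpa using hn.not_ge) _).symm)
    simpa using h
  have hW0 : ∀ n, (0:ℝ) ≤ ∫ x', Set.indicator
      {x : EuclideanSpace ℝ (Fin N) | ‖y n‖ / 2 ≤ ‖x‖} (fun x => |w x| ^ q) x' :=
    fun n => integral_nonneg fun x' =>
      Set.indicator_nonneg (fun t _ => Real.rpow_nonneg (abs_nonneg _) _) x'
  have hWrq : Tendsto (fun n => (∫ x', Set.indicator
      {x : EuclideanSpace ℝ (Fin N) | ‖y n‖ / 2 ≤ ‖x‖} (fun x => |w x| ^ q) x') ^ (1 / q))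
      atTop (𝓝 0) := by
    have hcont : ContinuousAt (fun t : ℝ => t ^ (1 / q)) 0 :=
      Real.continuousAt_rpow_const 0 (1 / q) (Or.inr (by positivity))
    have h := hcont.tendsto.comp hW_tendsto
    have h00 : (0:ℝ) ^ (1 / q) = 0 := Real.zero_rpow (by positivity)
    rw [h00] at h
    exact h
  have hG : Tendsto (fun n => (MK + |Kinf|) * (M' ^ (q - 1) * (∫ x', Set.indicator
      {x : EuclideanSpace ℝ (Fin N) | ‖y n‖ / 2 ≤ ‖x‖} (fun x => |w x| ^ q) x') ^ (1 / q)))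
      atTop (𝓝 0) := by
    have h := ((hWrq.const_mul (M' ^ (q - 1))).const_mul (MK + |Kinf|))
    simpa using h
  -- conclusion
  rw [NormedAddCommGroup.tendsto_nhds_zero]
  intro ε hε
  set D : ℝ := M' ^ (q - 1) * (∫ t, |w t| ^ q) ^ (1 / q) with hD_def
  have hD0 : 0 ≤ D :=
    mul_nonneg (Real.rpow_nonneg hM'0 _) (Real.rpow_nonneg hIw0 _)
  set δ : ℝ := ε / (2 * (D + 1)) with hδ_def
  have hδpos : 0 < δ := by
    apply div_pos hε
    positivity
  have hKev : ∀ᶠ x : EuclideanSpace ℝ (Fin N) in cocompact _, |K x - Kinf| < δ := by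
    have h := Metric.tendsto_nhds.mp hKlim δ hδpos
    simpa [Real.dist_eq] using h
  obtain ⟨t, htc, hts⟩ := Filter.mem_cocompact.mp hKev
  obtain ⟨R, hR⟩ := htc.isBounded.subset_closedBall 0
  have hKR : ∀ x : EuclideanSpace ℝ (Fin N), R < ‖x‖ → |K x - Kinf| ≤ δ := by
    intro x hx
    have hxt : x ∉ t := by
      intro hxt
      have h := hR hxt
      rw [Metric.mem_closedBall, dist_zero_right] at h
      linarith
    exact (hts hxt).le
  have ev1 : ∀ᶠ n in atTop, R < ‖y n‖ / 2 := hr_tendsto.eventually_gt_atTop R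
  have ev2 : ∀ᶠ n in atTop, (MK + |Kinf|) * (M' ^ (q - 1) * (∫ x', Set.indicator
      {x : EuclideanSpace ℝ (Fin N) | ‖y n‖ / 2 ≤ ‖x‖} (fun x => |w x| ^ q) x') ^ (1 / q))
      < ε / 2 :=
    hG.eventually (gt_mem_nhds (by linarith))
  filter_upwards [ev1, ev2] with n h1 h2
  have hKδn : ∀ x : EuclideanSpace ℝ (Fin N), ‖y n‖ / 2 ≤ ‖x‖ → |K x - Kinf| ≤ δ :=
    fun x hx => hKR x (lt_of_lt_of_le h1 hx)
  have hkey := key_aux hq K Kinf MK hKb (u n) (hu n) w hw (y n) δ hδpos.le hKδn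
  -- bound (∫ |u n|^q)^((q-1)/q) ≤ M'^(q-1)
  have hA : (∫ x, |u n x| ^ q) ^ ((q - 1) / q) ≤ M' ^ (q - 1) := by
    have h3 : (0:ℝ) ≤ ∫ x, |u n x| ^ q :=
      integral_nonneg fun x => Real.rpow_nonneg (abs_nonneg _) _
    have h5 := Real.rpow_le_rpow h3 (hIu_le n) (by positivity : (0:ℝ) ≤ (q - 1) / q)
    refine h5.trans_eq ?_
    rw [← Real.rpow_mul hM'0]
    congr 1
    field_simp
  have hWq0 : 0 ≤ (∫ x', Set.indicator
      {x : EuclideanSpace ℝ (Fin N) | ‖y n‖ / 2 ≤ ‖x‖} (fun x => |w x| ^ q) x') ^ (1 / q) :=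
    Real.rpow_nonneg (hW0 n) _
  have hIwq0 : 0 ≤ (∫ t, |w t| ^ q) ^ (1 / q) := Real.rpow_nonneg hIw0 _
  have hδD : δ * D ≤ ε / 2 := by
    have hDpos : (0:ℝ) < D + 1 := by linarith
    have heq : δ * (D + 1) = ε / 2 := by
      rw [hδ_def]
      field_simp
    have : δ * D ≤ δ * (D + 1) := by nlinarith
    linarith
  calc ‖∫ x : EuclideanSpace ℝ (Fin N),
        (K x - Kinf) * |u n x| ^ (q - 2) * u n x * w (x - y n)‖
      ≤ δ * ((∫ x, |u n x| ^ q) ^ ((q - 1) / q) * (∫ x, |w x| ^ q) ^ (1 / q)) +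
        (MK + |Kinf|) * ((∫ x, |u n x| ^ q) ^ ((q - 1) / q) *
          (∫ x', Set.indicator {x : EuclideanSpace ℝ (Fin N) | ‖y n‖ / 2 ≤ ‖x‖}
            (fun x => |w x| ^ q) x') ^ (1 / q)) := hkey
    _ ≤ δ * (M' ^ (q - 1) * (∫ x, |w x| ^ q) ^ (1 / q)) +
        (MK + |Kinf|) * (M' ^ (q - 1) *
          (∫ x', Set.indicator {x : EuclideanSpace ℝ (Fin N) | ‖y n‖ / 2 ≤ ‖x‖}
            (fun x => |w x| ^ q) x') ^ (1 / q)) :=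
        add_le_add
          (mul_le_mul_of_nonneg_left (mul_le_mul_of_nonneg_right hA hIwq0) hδpos.le)
          (mul_le_mul_of_nonneg_left (mul_le_mul_of_nonneg_right hA hWq0) hCK0)
    _ < δ * D + ε / 2 := by
        rw [hD_def]
        exact add_lt_add_of_le_of_lt le_rfl h2
    _ ≤ ε / 2 + ε / 2 := add_le_add_left hδD _
    _ = ε := by ring
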